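/- arXiv:1304.6285 — 2 statements merged into one kernel-verified Lean document; each statement's English description precedes it below -/
import Mathlib

section
/- (Abstract form of Theorem 3.1(1): relation between Whittaker–Betti periods and relative periods in bottom degree.) Assume the nonzero complex numbers p₊, p₋, p₊', p₋', Ω, Ω' satisfy: (W1) for all w ∈ W, σ(p₊)⁻¹ • s₊(F₊ w) = (p₊')⁻¹ • F₊'(s_W w); (W2) for all w ∈ W, σ(p₋)⁻¹ • s₋(F₋ w) = (p₋')⁻¹ • F₋'(s_W w); (R) for all h ∈ H₊, σ(Ω) • s₋(T h) = Ω' • T'(s₊ h); (C) T ∘ F₊ = F₋ and T' ∘ F₊' = F₋'. Then σ(p₊ · (p₋ · Ω)⁻¹) = p₊' · (p₋' · Ω')⁻¹. -/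
/-- Abstract form of Theorem 3.1(1): relation between Whittaker–Betti periods
and relative periods in bottom degree. -/
theorem whittaker_betti_relative_period_relation
    (σ : ℂ ≃+* ℂ)
    {W W' Hp Hm Hp' Hm' : Type*}
    [AddCommGroup W] [Module ℂ W] [AddCommGroup W'] [Module ℂ W']
    [AddCommGroup Hp] [Module ℂ Hp] [AddCommGroup Hm] [Module ℂ Hm]
    [AddCommGroup Hp'] [Module ℂ Hp'] [AddCommGroup Hm'] [Module ℂ Hm']
    -- ℂ-linear isomorphisms
    (Fp : W ≃ₗ[ℂ] Hp) (Fm : W ≃ₗ[ℂ] Hm)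
    (Fp' : W' ≃ₗ[ℂ] Hp') (Fm' : W' ≃ₗ[ℂ] Hm')
    (T : Hp ≃ₗ[ℂ] Hm) (T' : Hp' ≃ₗ[ℂ] Hm')
    -- σ-semilinear bijections
    (s_W : W →ₛₗ[(σ : ℂ →+* ℂ)] W')
    (sp : Hp →ₛₗ[(σ : ℂ →+* ℂ)] Hp')
    (sm : Hm →ₛₗ[(σ : ℂ →+* ℂ)] Hm')
    (hsW : Function.Bijective s_W)
    (hsp : Function.Bijective sp)
    (hsm : Function.Bijective sm)
    -- W is nontrivial
    (hW : ∃ w : W, w ≠ 0)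
    -- the periods
    (pp pm pp' pm' Ω Ω' : ℂ)
    (hpp : pp ≠ 0) (hpm : pm ≠ 0) (hpp' : pp' ≠ 0) (hpm' : pm' ≠ 0)
    (hΩ : Ω ≠ 0) (hΩ' : Ω' ≠ 0)
    -- (W1)
    (hW1 : ∀ w : W, (σ pp)⁻¹ • sp (Fp w) = (pp')⁻¹ • Fp' (s_W w))
    -- (W2)
    (hW2 : ∀ w : W, (σ pm)⁻¹ • sm (Fm w) = (pm')⁻¹ • Fm' (s_W w))
    -- (R)
    (hR : ∀ h : Hp, σ Ω • sm (T h) = Ω' • T' (sp h))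
    -- (C)
    (hC : ∀ w : W, T (Fp w) = Fm w)
    (hC' : ∀ w' : W', T' (Fp' w') = Fm' w') :
    σ (pp * (pm * Ω)⁻¹) = pp' * (pm' * Ω')⁻¹ := by
  obtain ⟨w, hw⟩ := hW
  have hσpp : σ pp ≠ 0 := fun h => hpp (by simpa using σ.injective (h.trans (map_zero σ).symm))
  have hσpm : σ pm ≠ 0 := fun h => hpm (by simpa using σ.injective (h.trans (map_zero σ).symm))
  have hσΩ : σ Ω ≠ 0 := fun h => hΩ (by simpa using σ.injective (h.trans (map_zero σ).symm))
  set v : Hm' := Fm' (s_W w) with hv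
  have hvne : v ≠ 0 := by
    intro h
    apply hw
    have h1 : s_W w = 0 := by
      have := Fm'.injective (h.trans (map_zero Fm').symm)
      simpa using this
    have := hsW.injective (h1.trans (map_zero s_W).symm)
    simpa using this
  -- sm (Fm w) = σ pm • pm'⁻¹ • v
  have h2 : sm (Fm w) = (σ pm * pm'⁻¹) • v := by
    have := hW2 w
    rw [mul_smul]
    rw [← this, smul_smul, mul_inv_cancel₀ hσpm, one_smul]
  -- sp (Fp w) = σ pp • pp'⁻¹ • Fp' (s_W w)
  have h1 : sp (Fp w) = (σ pp * pp'⁻¹) • Fp' (s_W w) := by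
    have := hW1 w
    rw [mul_smul, ← this, smul_smul, mul_inv_cancel₀ hσpp, one_smul]
  have hRw := hR (Fp w)
  rw [hC w, h2, h1, map_smul, hC', smul_smul, smul_smul, ← hv] at hRw
  have hdiff : (σ Ω * (σ pm * pm'⁻¹) - Ω' * (σ pp * pp'⁻¹)) • v = 0 := by
    rw [sub_smul, hRw, sub_self]
  have hscal : σ Ω * (σ pm * pm'⁻¹) = Ω' * (σ pp * pp'⁻¹) := by
    rcases smul_eq_zero.mp hdiff with h | h
    · exact sub_eq_zero.mp h
    · exact absurd h hvne
  rw [map_mul, map_inv₀, map_mul]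
  field_simp at hscal ⊢
  linear_combination -hscal
end

section
/- (Abstract form of Theorem 3.1(2): relation between Shalika–Betti periods and relative periods in top degree.) Assume the nonzero complex numbers ω₊, ω₋, ω₊', ω₋', Ω, Ω' satisfy: (S1) for all s ∈ S, σ(ω₊)⁻¹ • s₊(Θ₊ s) = (ω₊')⁻¹ • Θ₊'(s_S s); (S2) for all s ∈ S, σ(ω₋)⁻¹ • s₋(Θ₋ s) = (ω₋')⁻¹ • Θ₋'(s_S s); (R) for all h ∈ H₊, σ(Ω) • s₋(T h) = Ω' • T'(s₊ h); (C) T ∘ Θ₊ = Θ₋ and T' ∘ Θ₊' = Θ₋'. Then σ(ω₊ · (ω₋ · Ω)⁻¹) = ω₊' · (ω₋' · Ω')⁻¹. -/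
/-- Abstract form of Theorem 3.1(2): relation between Shalika–Betti periods
and relative periods in top degree. -/
theorem shalika_betti_relative_period_relation
    (σ : ℂ ≃+* ℂ)
    {S S' Hp Hm Hp' Hm' : Type*}
    [AddCommGroup S] [Module ℂ S] [AddCommGroup S'] [Module ℂ S']
    [AddCommGroup Hp] [Module ℂ Hp] [AddCommGroup Hm] [Module ℂ Hm]
    [AddCommGroup Hp'] [Module ℂ Hp'] [AddCommGroup Hm'] [Module ℂ Hm']
    -- ℂ-linear isomorphisms
    (Θp : S ≃ₗ[ℂ] Hp) (Θm : S ≃ₗ[ℂ] Hm)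
    (Θp' : S' ≃ₗ[ℂ] Hp') (Θm' : S' ≃ₗ[ℂ] Hm')
    (T : Hp ≃ₗ[ℂ] Hm) (T' : Hp' ≃ₗ[ℂ] Hm')
    -- σ-semilinear bijections
    (s_S : S →ₛₗ[(σ : ℂ →+* ℂ)] S')
    (sp : Hp →ₛₗ[(σ : ℂ →+* ℂ)] Hp')
    (sm : Hm →ₛₗ[(σ : ℂ →+* ℂ)] Hm')
    (hsS : Function.Bijective s_S)
    (hsp : Function.Bijective sp)
    (hsm : Function.Bijective sm)
    -- W is nontrivial
    (hS : ∃ x : S, x ≠ 0)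
    -- the periods
    (ωp ωm ωp' ωm' Ω Ω' : ℂ)
    (hωp : ωp ≠ 0) (hωm : ωm ≠ 0) (hωp' : ωp' ≠ 0) (hωm' : ωm' ≠ 0)
    (hΩ : Ω ≠ 0) (hΩ' : Ω' ≠ 0)
    -- (S1)
    (hS1 : ∀ x : S, (σ ωp)⁻¹ • sp (Θp x) = (ωp')⁻¹ • Θp' (s_S x))
    -- (S2)
    (hS2 : ∀ x : S, (σ ωm)⁻¹ • sm (Θm x) = (ωm')⁻¹ • Θm' (s_S x))
    -- (R)
    (hR : ∀ h : Hp, σ Ω • sm (T h) = Ω' • T' (sp h))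
    -- (C)
    (hC : ∀ x : S, T (Θp x) = Θm x)
    (hC' : ∀ x' : S', T' (Θp' x') = Θm' x') :
    σ (ωp * (ωm * Ω)⁻¹) = ωp' * (ωm' * Ω')⁻¹ := by

  obtain ⟨x, hx⟩ := hS
  -- the nonzero test vector
  set v : Hm' := Θm' (s_S x) with hv
  have hvne : v ≠ 0 := by
    simp only [hv, ne_eq, map_eq_zero_iff _ (Θm'.injective)]
    intro h
    exact hx (hsS.1 (by simpa using h))
  have h1 : sp (Θp x) = (σ ωp * (ωp')⁻¹) • Θp' (s_S x) := by
    have := hS1 x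
    have h2 := congrArg (fun y => σ ωp • y) this
    simp only [smul_smul] at h2
    rw [mul_inv_cancel₀ (by simpa using hωp), one_smul] at h2
    exact h2
  have h2 : sm (Θm x) = (σ ωm * (ωm')⁻¹) • v := by
    have := hS2 x
    have h2 := congrArg (fun y => σ ωm • y) this
    simp only [smul_smul] at h2
    rw [mul_inv_cancel₀ (by simpa using hωm), one_smul] at h2
    rw [h2, hv]
  have hR1 := hR (Θp x)
  rw [hC x, h2, h1, map_smul, hC', smul_smul, smul_smul] at hR1
  have hsc : σ Ω * (σ ωm * (ωm')⁻¹) = Ω' * (σ ωp * (ωp')⁻¹) :=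
    smul_left_injective ℂ hvne (by simpa using hR1)
  have hσΩ : σ Ω ≠ 0 := by simpa using hΩ
  have hσωm : σ ωm ≠ 0 := by simpa using hωm
  have hσωp : σ ωp ≠ 0 := by simpa using hωp
  rw [map_mul, map_inv₀, map_mul]
  field_simp at hsc ⊢
  linear_combination -hsc
end
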